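/- Let p be a prime and w a word over {0,...,p-1} with |w| > 1. The sequence (a_{p;w}(n))_{n≥0} has no prefix of the form v^{p+1} where |v| = i·p^{|w|-1} for some integer i ≥ p+1. -/

import Mathlib

/-- Number of occurrences of the word `w` as a factor of the word `x`. -/
def occCount (w x : List ℕ) : ℕ :=
  (List.range (x.length + 1)).countP (fun i => decide (w <+: x.drop i))

/-- Base-`m` expansion of `n`, most significant digit first, with `0` written as the digit `0`. -/
def baseExp (m n : ℕ) : List ℕ :=
  if n = 0 then [0] else (Nat.digits m n).reverse

/-- `e_{m;w}(n)`: number of occurrences of `w` in the base-`m` expansion of `n`. -/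
def eCount (m : ℕ) (w : List ℕ) (n : ℕ) : ℕ := occCount w (baseExp m n)

/-- `a_{m;w}(n) = e_{m;w}(n) mod m`. -/
def aSeq (m : ℕ) (w : List ℕ) (n : ℕ) : ℕ := eCount m w n % m

/-- The value `(w)_m` of the digit string `w` in base `m`. -/
def wordVal (m : ℕ) (w : List ℕ) : ℕ := w.foldl (fun acc d => acc * m + d) 0

/-- The finite word `v` is a prefix of the infinite sequence `s`. -/
def IsPrefixSeq (v : List ℕ) (s : ℕ → ℕ) : Prop := ∀ n < v.length, s n = v.getD n 0

/-! ### Auxiliary definitions -/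

/-- Indicator of an occurrence of `w` ending at the least significant digit of `n`. -/
def indOcc (p : ℕ) (w : List ℕ) (n : ℕ) : ℕ :=
  if n % p ^ w.length = wordVal p w ∧ p ^ (w.length - 1) ≤ n then 1 else 0

def eSum (p : ℕ) (w : List ℕ) (N : ℕ) : ℕ := ∑ n ∈ Finset.range N, eCount p w n

def iSum (p : ℕ) (w : List ℕ) (N : ℕ) : ℕ := ∑ n ∈ Finset.range N, indOcc p w n

def cSum (Q V N : ℕ) : ℕ := ∑ n ∈ Finset.range N, if n % Q = V then 1 else 0

/-! ### List-level lemmas -/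

lemma occCount_short {w x : List ℕ} (h : x.length < w.length) : occCount w x = 0 := by
  unfold occCount
  rw [List.countP_eq_zero]
  intro i _hi
  simp only [decide_eq_true_eq]
  intro hpre
  have h1 := hpre.length_le
  have h2 : (x.drop i).length ≤ x.length := by simp
  omega

lemma occCount_cons (w : List ℕ) (a : ℕ) (x : List ℕ) :
    occCount w (a :: x) = (if w <+: a :: x then 1 else 0) + occCount w x := by
  unfold occCount
  rw [show (a :: x).length + 1 = (x.length + 1) + 1 from rfl, List.range_succ_eq_map]
  rw [List.countP_cons, List.countP_map]
  simp only [List.drop_zero, Function.comp, List.drop_succ_cons]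
  rw [Nat.add_comm]
  congr 1
  by_cases h : w <+: a :: x <;> simp [h]

lemma prefix_concat_iff' {w z : List ℕ} {c : ℕ} :
    w <+: z ++ [c] ↔ w <+: z ∨ w = z ++ [c] := by
  constructor
  · intro h
    rcases le_or_gt w.length z.length with hl | hl
    · left
      have h1 := List.prefix_iff_eq_take.mp h
      rw [List.take_append_of_le_length hl] at h1
      exact h1 ▸ List.take_prefix _ _
    · right
      have hle := h.length_le
      simp only [List.length_append, List.length_cons, List.length_nil] at hle
      have hlw : w.length = z.length + 1 := by omega
      exact h.eq_of_length (by simp [hlw])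
  · rintro (h | rfl)
    · exact h.trans (List.prefix_append z [c])
    · exact List.prefix_rfl

lemma ite_or_split {A B : Prop} [Decidable A] [Decidable B] (h : A → B → False) :
    (if A ∨ B then (1 : ℕ) else 0) = (if A then 1 else 0) + (if B then 1 else 0) := by
  by_cases hA : A <;> by_cases hB : B <;> simp [hA, hB]
  exact h hA hB

lemma occCount_concat (w : List ℕ) (hw : 2 ≤ w.length) (u : List ℕ) (c : ℕ) :
    occCount w (u ++ [c]) = occCount w u + (if w.reverse <+: c :: u.reverse then 1 else 0) := by
  induction u with
  | nil =>
    have h1 : ¬(w <+: [c]) := fun h => by have := h.length_le; simp at this; omega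
    have h2 : ¬(w <+: ([] : List ℕ)) := fun h => by
      have := h.length_le; simp only [List.length_nil] at this; omega
    have h3 : ¬(w.reverse <+: [c]) := fun h => by have := h.length_le; simp at this; omega
    simp [occCount, h1, h2, h3, List.range_succ]
  | cons a u ih =>
    rw [List.cons_append, occCount_cons, occCount_cons, ih]
    have e1 : (w <+: a :: (u ++ [c])) ↔ (w <+: a :: u ∨ w = (a :: u) ++ [c]) := by
      rw [show a :: (u ++ [c]) = (a :: u) ++ [c] from rfl]
      exact prefix_concat_iff'
    have e2 : (w.reverse <+: c :: (a :: u).reverse) ↔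
        (w.reverse <+: c :: u.reverse ∨ w = (a :: u) ++ [c]) := by
      rw [show (a :: u).reverse = u.reverse ++ [a] by simp,
        show c :: (u.reverse ++ [a]) = (c :: u.reverse) ++ [a] from rfl]
      rw [prefix_concat_iff']
      constructor
      · rintro (h | h)
        · exact Or.inl h
        · right
          have := congrArg List.reverse h
          simpa using this
      · rintro (h | h)
        · exact Or.inl h
        · right
          rw [h]; simp
    rw [if_congr e1 rfl rfl, if_congr e2 rfl rfl]
    rw [ite_or_split (fun h1 h2 => by
      have t1 := h1.length_le
      have t2 := congrArg List.length h2
      simp at t1 t2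
      omega)]
    rw [ite_or_split (fun h1 h2 => by
      have t1 := h1.length_le
      have t2 := congrArg List.length h2
      simp at t1 t2
      omega)]
    ring

/-! ### Digit arithmetic -/

lemma foldl_base (p : ℕ) : ∀ (l : List ℕ) (a : ℕ),
    List.foldl (fun acc d => acc * p + d) a l = a * p ^ l.length + Nat.ofDigits p l.reverse := by
  intro l
  induction l with
  | nil => intro a; simp [Nat.ofDigits]
  | cons d t ih =>
    intro a
    rw [List.foldl_cons, ih]
    rw [List.reverse_cons, Nat.ofDigits_append]
    simp [Nat.ofDigits_cons, Nat.ofDigits_nil]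
    ring

lemma wordVal_eq_ofDigits (p : ℕ) (w : List ℕ) : wordVal p w = Nat.ofDigits p w.reverse := by
  unfold wordVal
  rw [foldl_base]
  simp

lemma ofDigits_inj (p : ℕ) (hp : 2 ≤ p) : ∀ (l₁ l₂ : List ℕ), l₁.length = l₂.length →
    (∀ d ∈ l₁, d < p) → (∀ d ∈ l₂, d < p) →
    Nat.ofDigits p l₁ = Nat.ofDigits p l₂ → l₁ = l₂ := by
  intro l₁
  induction l₁ with
  | nil => intro l₂ hl _ _ _; cases l₂ <;> simp_all
  | cons a t ih =>
    intro l₂ hl h1 h2 heq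
    cases l₂ with
    | nil => simp at hl
    | cons b t₂ =>
      rw [Nat.ofDigits_cons, Nat.ofDigits_cons] at heq
      have ha : a < p := h1 a (by simp)
      have hb : b < p := h2 b (by simp)
      have hab : a = b := by
        have := congrArg (· % p) heq
        simpa [Nat.add_mul_mod_self_left, Nat.mod_eq_of_lt ha, Nat.mod_eq_of_lt hb] using this
      subst hab
      have htt : Nat.ofDigits p t = Nat.ofDigits p t₂ := by
        have hp0 : 0 < p := by omega
        have := Nat.eq_of_mul_eq_mul_left hp0 (by omega : p * Nat.ofDigits p t = p * Nat.ofDigits p t₂)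
        exact_mod_cast this
      have := ih t₂ (by simpa using hl) (fun d hd => h1 d (by simp [hd]))
        (fun d hd => h2 d (by simp [hd])) htt
      rw [this]

lemma ofDigits_take (p : ℕ) (hp : 2 ≤ p) : ∀ (k n : ℕ),
    Nat.ofDigits p ((Nat.digits p n).take k) = n % p ^ k := by
  intro k
  induction k with
  | zero => intro n; simp [Nat.ofDigits, Nat.mod_one]
  | succ k ih =>
    intro n
    rcases Nat.eq_zero_or_pos n with rfl | hn
    · simp [Nat.ofDigits]
    · rw [Nat.digits_def' (by omega : 1 < p) hn, List.take_succ_cons, Nat.ofDigits_cons, ih]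
      -- goal : n % p + p * (n / p % p ^ k) = n % p ^ (k+1)
      have h1 : n / p % p ^ k < p ^ k := Nat.mod_lt _ (pow_pos (by omega : 0 < p) k)
      have h2 : n % p < p := Nat.mod_lt _ (by omega)
      have hx : p * (n / p % p ^ k) + n % p < p ^ (k + 1) := by
        calc p * (n / p % p ^ k) + n % p < p * (n / p % p ^ k) + p := by omega
          _ = p * (n / p % p ^ k + 1) := by ring
          _ ≤ p * p ^ k := Nat.mul_le_mul_left p h1
          _ = p ^ (k + 1) := by rw [pow_succ]; ring
      have decomp : n = p ^ (k + 1) * (n / p / p ^ k) + (p * (n / p % p ^ k) + n % p) := by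
        calc n = p * (n / p) + n % p := (Nat.div_add_mod _ _).symm
          _ = p * (p ^ k * (n / p / p ^ k) + n / p % p ^ k) + n % p := by
              rw [Nat.div_add_mod (n / p) (p ^ k)]
          _ = p ^ (k + 1) * (n / p / p ^ k) + (p * (n / p % p ^ k) + n % p) := by
              rw [pow_succ]; ring
      have key : n % p ^ (k + 1) = p * (n / p % p ^ k) + n % p := by
        conv_lhs => rw [decomp]
        rw [Nat.mul_add_mod, Nat.mod_eq_of_lt hx]
      omega

lemma len_char (p : ℕ) (hp : 2 ≤ p) (ℓ n : ℕ) (hℓ : 1 ≤ ℓ) :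
    p ^ (ℓ - 1) ≤ n ↔ ℓ ≤ (Nat.digits p n).length := by
  rcases Nat.eq_zero_or_pos n with rfl | hn
  · have hpow : 0 < p ^ (ℓ - 1) := pow_pos (by omega : 0 < p) _
    simp only [Nat.digits_zero, List.length_nil]
    omega
  · rw [Nat.digits_len p n (by omega) (by omega)]
    rw [← Nat.le_log_iff_pow_le (by omega) (by omega)]
    omega

lemma suffix_char (p : ℕ) (hp : 2 ≤ p) (w : List ℕ) (hw : ∀ d ∈ w, d < p)
    (hlen : 2 ≤ w.length) (n : ℕ) :
    w.reverse <+: Nat.digits p n ↔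
      (n % p ^ w.length = wordVal p w ∧ p ^ (w.length - 1) ≤ n) := by
  rw [wordVal_eq_ofDigits]
  constructor
  · intro h
    have hlen2 : w.length ≤ (Nat.digits p n).length := by
      have := h.length_le; simpa using this
    have htake : (Nat.digits p n).take w.length = w.reverse := by
      have h1 := List.prefix_iff_eq_take.mp h
      rw [← h1.symm]
      congr 1
      simp
    constructor
    · rw [← ofDigits_take p hp w.length n, htake]
    · exact (len_char p hp w.length n (by omega)).mpr hlen2
  · rintro ⟨hmod, hsize⟩
    have hlen2 : w.length ≤ (Nat.digits p n).length :=
      (len_char p hp w.length n (by omega)).mp hsize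
    have htake : (Nat.digits p n).take w.length = w.reverse := by
      apply ofDigits_inj p hp
      · simp; omega
      · intro d hd
        exact Nat.digits_lt_base (by omega) (List.mem_of_mem_take hd)
      · intro d hd; exact hw d (by simpa using hd)
      · rw [ofDigits_take p hp, hmod]
    rw [← htake]
    exact List.take_prefix _ _

/-! ### The digit recurrence for `eCount` -/

lemma eCount_rec (p : ℕ) (hp : 2 ≤ p) (w : List ℕ) (hw : ∀ d ∈ w, d < p)
    (hlen : 2 ≤ w.length) (n : ℕ) :
    eCount p w n = eCount p w (n / p) + indOcc p w n := by
  have hP1 : p ≤ p ^ (w.length - 1) := by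
    calc p = p ^ 1 := (pow_one p).symm
    _ ≤ p ^ (w.length - 1) := Nat.pow_le_pow_right (by omega) (by omega)
  rcases Nat.lt_or_ge n p with hn | hn
  · -- n < p
    have hind : indOcc p w n = 0 := by
      unfold indOcc
      rw [if_neg]
      rintro ⟨_, h2⟩
      omega
    have h0 : eCount p w 0 = 0 := by
      unfold eCount baseExp
      rw [if_pos rfl]
      exact occCount_short (by simp; omega)
    rcases Nat.eq_zero_or_pos n with rfl | hn0
    · simp [hind, h0]
    · have hd : Nat.digits p n = [n] := by
        rw [Nat.digits_def' (by omega : 1 < p) hn0]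
        simp [Nat.mod_eq_of_lt hn, Nat.div_eq_of_lt hn]
      have hdiv : n / p = 0 := Nat.div_eq_of_lt hn
      have h1 : eCount p w n = 0 := by
        unfold eCount baseExp
        rw [if_neg (by omega), hd]
        exact occCount_short (by simp; omega)
      rw [hdiv, h1, h0, hind]
  · -- p ≤ n
    have hn0 : 0 < n := by omega
    have hq0 : 0 < n / p := Nat.div_pos hn (by omega)
    have hd : Nat.digits p n = n % p :: Nat.digits p (n / p) :=
      Nat.digits_def' (by omega : 1 < p) hn0
    have hbe : baseExp p n = baseExp p (n / p) ++ [n % p] := by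
      unfold baseExp
      rw [if_neg (by omega), if_neg (by omega), hd]
      simp
    have hbrev : (baseExp p (n / p)).reverse = Nat.digits p (n / p) := by
      unfold baseExp
      rw [if_neg (by omega)]
      simp
    have : eCount p w n = occCount w (baseExp p (n / p)) +
        (if w.reverse <+: n % p :: Nat.digits p (n / p) then 1 else 0) := by
      rw [eCount, hbe, occCount_concat w hlen, hbrev]
    rw [this, ← hd]
    unfold indOcc
    congr 1
    rw [if_congr (suffix_char p hp w hw hlen n) rfl rfl]


/-! ### Summation lemmas -/

lemma castIte (p : ℕ) (c : Prop) [Decidable c] :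
    (((if c then 1 else 0 : ℕ)) : ZMod p) = if c then 1 else 0 := by
  split_ifs <;> simp

lemma cSum_eq (Q V : ℕ) (hQ : 0 < Q) (hV : V < Q) (N : ℕ) :
    cSum Q V N = N / Q + if V < N % Q then 1 else 0 := by
  induction N with
  | zero => simp [cSum]
  | succ N ih =>
    rw [cSum, Finset.sum_range_succ, ← cSum, ih]
    have hr : N % Q < Q := Nat.mod_lt _ hQ
    have hd : N = Q * (N / Q) + N % Q := (Nat.div_add_mod _ _).symm
    have hd2 : Q * (N / Q + 1) = Q * (N / Q) + Q := by ring
    rcases Nat.lt_or_ge (N % Q + 1) Q with hc | hc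
    · have e1 : (N + 1) / Q = N / Q := by
        rw [show N + 1 = Q * (N / Q) + (N % Q + 1) by omega]
        rw [Nat.mul_add_div hQ, Nat.div_eq_of_lt hc]
        omega
      have e2 : (N + 1) % Q = N % Q + 1 := by
        rw [show N + 1 = Q * (N / Q) + (N % Q + 1) by omega]
        rw [Nat.mul_add_mod, Nat.mod_eq_of_lt hc]
      rw [e1, e2]
      split_ifs <;> omega
    · have e1 : (N + 1) / Q = N / Q + 1 := by
        rw [show N + 1 = Q * (N / Q + 1) by omega]
        exact Nat.mul_div_cancel_left _ hQ
      have e2 : (N + 1) % Q = 0 := by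
        rw [show N + 1 = Q * (N / Q + 1) by omega]
        exact Nat.mul_mod_right _ _
      rw [e1, e2]
      split_ifs <;> omega

lemma iSum_eq (p : ℕ) (hp : 2 ≤ p) (w : List ℕ) (hlen : 2 ≤ w.length)
    (hV : wordVal p w < p ^ w.length) (N : ℕ) :
    iSum p w N + (if wordVal p w < p ^ (w.length - 1) ∧ wordVal p w < N then 1 else 0)
      = cSum (p ^ w.length) (wordVal p w) N := by
  set V := wordVal p w with hVdef
  set P := p ^ (w.length - 1) with hPdef
  set Q := p ^ w.length with hQdef
  have hP0 : 0 < P := pow_pos (by omega : 0 < p) _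
  have hPQ : P < Q := by
    have h1 : P * p = Q := by rw [hPdef, hQdef, ← pow_succ]; congr 1; omega
    nlinarith
  induction N with
  | zero => simp [iSum, cSum]
  | succ N ih =>
    rw [iSum, cSum, Finset.sum_range_succ, Finset.sum_range_succ, ← iSum, ← cSum]
    have key : indOcc p w N + (if V < P ∧ V < N + 1 then 1 else 0)
        = (if V < P ∧ V < N then 1 else 0) + (if N % Q = V then 1 else 0) := by
      unfold indOcc
      rw [← hVdef, ← hPdef, ← hQdef]
      have h1 : N % Q ≤ N := Nat.mod_le _ _
      by_cases hPN : P ≤ N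
      · split_ifs <;> omega
      · have h2 : N % Q = N := Nat.mod_eq_of_lt (by omega)
        split_ifs <;> omega
    omega

lemma eSum_rec (p : ℕ) (hp : 2 ≤ p) (w : List ℕ) (hw : ∀ d ∈ w, d < p)
    (hlen : 2 ≤ w.length) (A : ℕ) :
    eSum p w (p * A) = p * eSum p w A + iSum p w (p * A) := by
  induction A with
  | zero => simp [eSum, iSum]
  | succ A ih =>
    have h1 : p * (A + 1) = p * A + p := by ring
    rw [h1, eSum, iSum, Finset.sum_range_add, Finset.sum_range_add, ← eSum, ← iSum]
    have h2 : ∀ j ∈ Finset.range p,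
        eCount p w (p * A + j) = eCount p w A + indOcc p w (p * A + j) := by
      intro j hj
      rw [eCount_rec p hp w hw hlen (p * A + j)]
      congr 2
      rw [Nat.mul_add_div (by omega), Nat.div_eq_of_lt (Finset.mem_range.mp hj)]
      omega
    rw [Finset.sum_congr rfl h2, Finset.sum_add_distrib, Finset.sum_const, Finset.card_range,
      smul_eq_mul]
    have h3 : eSum p w (A + 1) = eSum p w A + eCount p w A := by
      rw [eSum, Finset.sum_range_succ, ← eSum]
    rw [h3, Nat.mul_add]
    omega

lemma eSum_formula (p : ℕ) (hp : 2 ≤ p) (w : List ℕ) (hw : ∀ d ∈ w, d < p)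
    (hlen : 2 ≤ w.length) (m : ℕ) (hm : 1 ≤ m) :
    (eSum p w (m * p ^ (w.length - 1)) : ZMod p)
      + ((if wordVal p w < p ^ (w.length - 1) then 1 else 0 : ℕ) : ZMod p)
      = ((m / p : ℕ) : ZMod p)
      + ((if wordVal p w < (m % p) * p ^ (w.length - 1) then 1 else 0 : ℕ) : ZMod p) := by
  set V := wordVal p w with hVdef
  set P := p ^ (w.length - 1) with hPdef
  set Q := p ^ w.length with hQdef
  have hP0 : 0 < P := pow_pos (by omega : 0 < p) _
  have hQ0 : 0 < Q := pow_pos (by omega : 0 < p) _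
  have hQP : Q = P * p := by rw [hPdef, hQdef, ← pow_succ]; congr 1; omega
  have hVQ : V < Q := by
    rw [hVdef, wordVal_eq_ofDigits, hQdef]
    calc Nat.ofDigits p w.reverse < p ^ w.reverse.length :=
          Nat.ofDigits_lt_base_pow_length (by omega) (by simpa using hw)
      _ = p ^ w.length := by simp
  have hsplit : m * P = p * (m * p ^ (w.length - 2)) := by
    rw [hPdef, show w.length - 1 = (w.length - 2) + 1 by omega, pow_succ]; ring
  have h1 : (eSum p w (m * P) : ZMod p) = (iSum p w (m * P) : ZMod p) := by
    rw [hsplit, eSum_rec p hp w hw hlen]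
    push_cast
    rw [ZMod.natCast_self]
    ring
  have h2 := iSum_eq p hp w hlen hVQ (m * P)
  have h3 := cSum_eq Q V hQ0 hVQ (m * P)
  rw [← hVdef, ← hPdef, ← hQdef] at h2
  have hdiv : m * P / Q = m / p := by
    rw [hQP, show m * P = P * m by ring, Nat.mul_div_mul_left m p hP0]
  have hmod : m * P % Q = (m % p) * P := by
    rw [hQP, show m * P = P * m by ring, Nat.mul_mod_mul_left, Nat.mul_comm]
  have hPmP : P ≤ m * P := by
    calc P = 1 * P := by ring
      _ ≤ m * P := Nat.mul_le_mul_right P hm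
  have hbr : (if V < P ∧ V < m * P then 1 else 0) = (if V < P then (1 : ℕ) else 0) := by
    split_ifs <;> omega
  rw [hdiv, hmod] at h3
  have hnat : iSum p w (m * P) + (if V < P then (1 : ℕ) else 0)
      = m / p + (if V < (m % p) * P then 1 else 0) := by omega
  rw [h1]
  exact_mod_cast congrArg (Nat.cast (R := ZMod p)) hnat

/-! ### Main induction -/

lemma main_lemma (p : ℕ) (hp : p.Prime) (w : List ℕ) (hw : ∀ d ∈ w, d < p)
    (hlen : 2 ≤ w.length) :
    ∀ i, 1 ≤ i →
    ¬ (∀ k ≤ p, ∀ r < i * p ^ (w.length - 1),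
        (eCount p w (k * (i * p ^ (w.length - 1)) + r) : ZMod p) = (eCount p w r : ZMod p)) := by
  intro i
  induction i using Nat.strong_induction_on with
  | _ i IH =>
    intro hi H
    have hp2 : 2 ≤ p := hp.two_le
    haveI : Fact p.Prime := ⟨hp⟩
    set P := p ^ (w.length - 1) with hPdef
    set L := i * P with hLdef
    have hP0 : 0 < P := pow_pos (by omega : 0 < p) _
    have hL0 : 0 < L := Nat.mul_pos (by omega) hP0
    have hQP : p ^ w.length = P * p := by
      rw [hPdef, ← pow_succ]; congr 1; omega
    -- chunk lemma
    have chunk : ∀ k, k ≤ p + 1 →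
        (eSum p w (k * L) : ZMod p) = (k : ℕ) * (eSum p w L : ZMod p) := by
      intro k
      induction k with
      | zero => intro _; simp [eSum]
      | succ k ihk =>
        intro hk
        have h1 : (k + 1) * L = k * L + L := by ring
        rw [h1, eSum, Finset.sum_range_add, ← eSum]
        push_cast
        have h2 : (∑ x ∈ Finset.range L, ((eCount p w (k * L + x) : ZMod p)))
            = ∑ x ∈ Finset.range L, ((eCount p w x : ZMod p)) :=
          Finset.sum_congr rfl (fun r hr => H k (by omega) r (Finset.mem_range.mp hr))
        have h4 : (∑ x ∈ Finset.range L, ((eCount p w x : ZMod p)))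
            = ((eSum p w L : ℕ) : ZMod p) := by
          rw [eSum]; push_cast; rfl
        rw [h2, h4, ihk (by omega)]
        ring
    have F := fun m hm => eSum_formula p hp2 w hw hlen m hm
    have hA := chunk (p + 1) le_rfl
    have hp1 : (((p : ℕ) + 1 : ℕ) : ZMod p) = 1 := by
      push_cast
      rw [ZMod.natCast_self]
      ring
    have hA2 : (eSum p w ((p + 1) * L) : ZMod p) = (eSum p w L : ZMod p) := by
      rw [hA, hp1, one_mul]
    have F1 := F ((p + 1) * i) (Nat.mul_pos (by omega) hi)
    have F2 := F i hi
    rw [← hLdef] at F2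
    have harith1 : ((p + 1) * i) / p = i + i / p := by
      rw [show (p + 1) * i = p * i + i by ring, Nat.mul_add_div (by omega)]
    have harith2 : ((p + 1) * i) % p = i % p := by
      rw [show (p + 1) * i = p * i + i by ring, Nat.mul_add_mod]
    rw [harith1, harith2, show ((p + 1) * i) * P = (p + 1) * L by rw [hLdef]; ring, hA2] at F1
    have hi0 : ((i : ℕ) : ZMod p) = 0 := by
      push_cast at F1 F2
      linear_combination F2 - F1
    have hdvd : p ∣ i := (ZMod.natCast_eq_zero_iff i p).mp hi0
    obtain ⟨q, rfl⟩ := hdvd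
    have hq1 : 1 ≤ q := by
      rcases Nat.eq_zero_or_pos q with rfl | h
      · simp at hi
      · exact h
    by_cases hVP : wordVal p w < P
    · -- contradiction via k = 2
      have hB := chunk 2 (by omega)
      have F3 := F (2 * (p * q)) (Nat.mul_pos (by omega) (Nat.mul_pos (by omega) hq1))
      have harith3 : (2 * (p * q)) / p = 2 * q := by
        rw [show 2 * (p * q) = p * (2 * q) by ring]
        exact Nat.mul_div_cancel_left _ (by omega)
      have harith4 : (2 * (p * q)) % p = 0 := by
        rw [show 2 * (p * q) = p * (2 * q) by ring]
        exact Nat.mul_mod_right _ _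
      have harith5 : (p * q) % p = 0 := Nat.mul_mod_right _ _
      rw [harith3, harith4, show (2 * (p * q)) * P = 2 * L by rw [hLdef]; ring] at F3
      rw [harith5, show p * q / p = q from Nat.mul_div_cancel_left q (by omega)] at F2
      have hfalse : ¬ (wordVal p w < 0 * P) := by simp
      rw [if_neg hfalse] at F3 F2
      rw [if_pos hVP] at F3 F2
      rw [hB] at F3
      push_cast at F3 F2
      have : (1 : ZMod p) = 0 := by linear_combination (-1 : ZMod p) * F3 + 2 * F2
      exact one_ne_zero this
    · -- descent : p ∤ fails, i = p * q, P ≤ V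
      have hPV : P ≤ wordVal p w := by omega
      have Hq : ∀ k ≤ p, ∀ r < q * P,
          (eCount p w (k * (q * P) + r) : ZMod p) = (eCount p w r : ZMod p) := by
        intro k hk r hr
        have hrL : p * r < L := by
          rw [hLdef, show p * q * P = p * (q * P) by ring]
          exact (mul_lt_mul_iff_right₀ (show 0 < p by omega)).mpr hr
        have h1 := H k hk (p * r) hrL
        have e1 : eCount p w (k * L + p * r)
            = eCount p w (k * (q * P) + r) + indOcc p w (k * L + p * r) := by
          rw [show k * L + p * r = p * (k * (q * P) + r) by rw [hLdef]; ring]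
          rw [eCount_rec p hp2 w hw hlen]
          congr 2
          exact Nat.mul_div_cancel_left _ (by omega)
        have e2 : eCount p w (p * r) = eCount p w r + indOcc p w (p * r) := by
          rw [eCount_rec p hp2 w hw hlen (p * r)]
          congr 2
          exact Nat.mul_div_cancel_left _ (by omega)
        have e3 : indOcc p w (k * L + p * r) = indOcc p w (p * r) := by
          unfold indOcc
          have hmodQ : (k * L + p * r) % p ^ w.length = (p * r) % p ^ w.length := by
            rw [show k * L + p * r = p * r + (k * q) * p ^ w.length by
              rw [hQP, hLdef]; ring]
            exact Nat.add_mul_mod_self_right _ _ _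
          rw [hmodQ]
          by_cases hc : (p * r) % p ^ w.length = wordVal p w
          · have hge : P ≤ (p * r) % p ^ w.length := by omega
            have hge1 : P ≤ p * r := le_trans hge (Nat.mod_le _ _)
            have hge2 : P ≤ k * L + p * r := by omega
            simp [hc, ← hPdef, hge1, hge2]
          · simp [hc]
        rw [e1, e2, e3] at h1
        push_cast at h1
        have h5 : (eCount p w (k * (q * P) + r) : ZMod p) + (indOcc p w (p * r) : ZMod p)
            = (eCount p w r : ZMod p) + (indOcc p w (p * r) : ZMod p) := by
          linear_combination h1
        exact add_right_cancel h5
      have hqlt : q < p * q := by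
        have h := (mul_lt_mul_iff_left₀ (show 0 < q by omega)).mpr (show 1 < p by omega)
        simpa using h
      exact IH q hqlt hq1 Hq

/-! ### Flatten lemmas -/

lemma flatten_replicate_length (v : List ℕ) (K : ℕ) :
    ((List.replicate K v).flatten).length = K * v.length := by
  induction K with
  | zero => simp
  | succ K ih =>
    rw [List.replicate_succ, List.flatten_cons]
    simp [ih]
    ring

lemma flatten_replicate_getD (v : List ℕ) : ∀ (K j r : ℕ), j < K → r < v.length →
    ((List.replicate K v).flatten).getD (j * v.length + r) 0 = v.getD r 0 := by
  intro K
  induction K with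
  | zero => intro j r hj _; omega
  | succ K ih =>
    intro j r hj hr
    rw [List.replicate_succ, List.flatten_cons]
    cases j with
    | zero => simpa using List.getD_append _ _ _ _ (by simpa using hr)
    | succ j =>
      rw [show (j + 1) * v.length + r = v.length + (j * v.length + r) by ring]
      rw [List.getD_append_right _ _ _ _ (by omega)]
      simpa [Nat.add_sub_cancel_left] using ih j r (by omega) hr

theorem stmt11 (p : ℕ) (hp : p.Prime) (w : List ℕ)
    (hw : ∀ d ∈ w, d < p) (hlen : 1 < w.length) :
    ∀ (v : List ℕ) (i : ℕ), p + 1 ≤ i → v.length = i * p ^ (w.length - 1) →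
      ¬ IsPrefixSeq ((List.replicate (p + 1) v).flatten) (aSeq p w) := by
  intro v i hi hv hpre
  have hp2 : 2 ≤ p := hp.two_le
  have hlen2 : 2 ≤ w.length := hlen
  set P := p ^ (w.length - 1) with hPdef
  set L := i * P with hLdef
  have hL : v.length = L := hv
  have hL0 : 0 < L := Nat.mul_pos (by omega) (pow_pos (by omega : 0 < p) _)
  have hflatlen : ((List.replicate (p + 1) v).flatten).length = (p + 1) * L := by
    rw [flatten_replicate_length, hL]
  have H : ∀ k ≤ p, ∀ r < L, (eCount p w (k * L + r) : ZMod p) = (eCount p w r : ZMod p) := by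
    intro k hk r hr
    have hklr : k * L + r < (p + 1) * L := by
      have : k * L ≤ p * L := Nat.mul_le_mul_right L hk
      have : (p + 1) * L = p * L + L := by ring
      omega
    have h1 : aSeq p w (k * L + r) = v.getD r 0 := by
      rw [hpre (k * L + r) (by rw [hflatlen]; exact hklr)]
      rw [show k * L + r = k * v.length + r by rw [hL]]
      exact flatten_replicate_getD v (p + 1) k r (by omega) (by omega)
    have h2 : aSeq p w r = v.getD r 0 := by
      rw [hpre r (by rw [hflatlen]; omega)]
      have := flatten_replicate_getD v (p + 1) 0 r (by omega) (by omega)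
      simpa using this
    have h3 : eCount p w (k * L + r) % p = eCount p w r % p := by
      have := h1.trans h2.symm
      unfold aSeq at this
      exact this
    calc (eCount p w (k * L + r) : ZMod p)
        = ((eCount p w (k * L + r) % p : ℕ) : ZMod p) := by rw [ZMod.natCast_mod]
      _ = ((eCount p w r % p : ℕ) : ZMod p) := by rw [h3]
      _ = (eCount p w r : ZMod p) := by rw [ZMod.natCast_mod]
  exact main_lemma p hp w hw hlen2 i (by omega) H
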